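/- If x is a bi-infinite sequence which is not eventually periodic to the right, X is its orbit closure, n ∈ ℕ, and w is a subword of x of length at least c_X(n) + n, then w contains a right-special word of X of length n. -/

import Mathlib

open Filter Topology MeasureTheory

variable {A : Type*} {B : Type*}

/-- The shift by `m` on bi-infinite sequences. -/
def shiftBy (m : ℤ) (x : ℤ → A) : ℤ → A := fun i => x (i + m)

/-- The orbit closure of a point. -/
def orbitClosure [TopologicalSpace A] (x : ℤ → A) : Set (ℤ → A) :=
  closure {y | ∃ m : ℤ, y = shiftBy m x}

/-- A set of sequences invariant under all shifts. -/
def ShiftInvariant (X : Set (ℤ → A)) : Prop := ∀ m : ℤ, ∀ y ∈ X, shiftBy m y ∈ X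

/-- A subshift: closed and shift-invariant. -/
def IsSubshift [TopologicalSpace A] (X : Set (ℤ → A)) : Prop :=
  IsClosed X ∧ ShiftInvariant X

/-- The word `w` occurs in `x` at position `i`. -/
def occursAt (x : ℤ → A) (w : List A) (i : ℤ) : Prop :=
  ∀ k : Fin w.length, x (i + (k.val : ℤ)) = w.get k

/-- The word `w` occurs somewhere in some point of `X`. -/
def WordIn (X : Set (ℤ → A)) (w : List A) : Prop :=
  ∃ x ∈ X, ∃ i : ℤ, occursAt x w i

/-- The language of `X` in length `n`. -/
def langOf (X : Set (ℤ → A)) (n : ℕ) : Set (List A) :=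
  {w | w.length = n ∧ WordIn X w}

/-- The complexity function of `X`. -/
noncomputable def complexity (X : Set (ℤ → A)) (n : ℕ) : ℕ := (langOf X n).ncard

/-- `w` is right-special in `X`. -/
def RightSpecial (X : Set (ℤ → A)) (w : List A) : Prop :=
  ∃ a b : A, a ≠ b ∧ WordIn X (w ++ [a]) ∧ WordIn X (w ++ [b])

/-- `w` is left-special in `X`. -/
def LeftSpecial (X : Set (ℤ → A)) (w : List A) : Prop :=
  ∃ a b : A, a ≠ b ∧ WordIn X (a :: w) ∧ WordIn X (b :: w)

/-- The set of right-special words of length `n`. -/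
def RS (X : Set (ℤ → A)) (n : ℕ) : Set (List A) :=
  {w | w.length = n ∧ RightSpecial X w}

/-- The length-`ℓ` word of `x` starting at position `i`. -/
def wordAt (x : ℤ → A) (i : ℤ) (ℓ : ℕ) : List A :=
  List.ofFn (fun t : Fin ℓ => x (i + (t.val : ℤ)))

/-- `x` is a recurrent point: every word in it occurs infinitely often. -/
def RecurrentPt (x : ℤ → A) : Prop :=
  ∀ n : ℕ, ∀ i N : ℤ, ∃ j : ℤ, N ≤ j ∧ ∀ k : ℕ, k < n → x (j + k) = x (i + k)

/-- `x` is eventually periodic to the right. -/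
def EventuallyPeriodicRight (x : ℤ → A) : Prop :=
  ∃ p : ℤ, 0 < p ∧ ∃ N : ℤ, ∀ i : ℤ, N < i → x (i + p) = x i

/-- `x` is eventually periodic to the left. -/
def EventuallyPeriodicLeft (x : ℤ → A) : Prop :=
  ∃ p : ℤ, 0 < p ∧ ∃ N : ℤ, ∀ i : ℤ, i < N → x (i - p) = x i

/-- `M` is a minimal subsystem of `X`. -/
def MinimalSubsystem [TopologicalSpace A] (X M : Set (ℤ → A)) : Prop :=
  M ⊆ X ∧ M.Nonempty ∧ IsClosed M ∧ ShiftInvariant M ∧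
    ∀ M' ⊆ M, M'.Nonempty → IsClosed M' → ShiftInvariant M' → M' = M

/-- `x` is a generic point for the measure `μ`. -/
def GenericFor [TopologicalSpace A] [MeasurableSpace A] (x : ℤ → A)
    (μ : Measure (ℤ → A)) : Prop :=
  ∀ f : (ℤ → A) → ℝ, Continuous f →
    Tendsto (fun N : ℕ => (∑ i ∈ Finset.range N, f (shiftBy i x)) / (N : ℝ)) atTop
      (𝓝 (∫ y, f y ∂μ))

/-- `μ` is a generic measure for `X`. -/
def GenericMeasure [TopologicalSpace A] [MeasurableSpace A] (X : Set (ℤ → A))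
    (μ : Measure (ℤ → A)) : Prop :=
  ∃ x ∈ X, GenericFor x μ

lemma mem_orbitClosure_self [TopologicalSpace A] (x : ℤ → A) : x ∈ orbitClosure x :=
  subset_closure ⟨0, by funext i; simp [shiftBy]⟩

lemma wordAt_length (x : ℤ → A) (i : ℤ) (ℓ : ℕ) : (wordAt x i ℓ).length = ℓ := by
  simp [wordAt]

lemma wordIn_wordAt {X : Set (ℤ → A)} {x : ℤ → A} (hx : x ∈ X) (i : ℤ) (ℓ : ℕ) :
    WordIn X (wordAt x i ℓ) := by
  refine ⟨x, hx, i, fun k => ?_⟩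
  rw [List.get_eq_getElem]
  simp [wordAt, List.get_ofFn]

lemma wordAt_succ (x : ℤ → A) (i : ℤ) (ℓ : ℕ) :
    wordAt x i (ℓ + 1) = wordAt x i ℓ ++ [x (i + ℓ)] := by
  simp only [wordAt, List.ofFn_succ']
  simp [List.concat_eq_append]

lemma wordAt_eq_iff (x : ℤ → A) (i j : ℤ) (ℓ : ℕ) :
    wordAt x i ℓ = wordAt x j ℓ ↔ ∀ k : ℕ, k < ℓ → x (i + k) = x (j + k) := by
  rw [wordAt, wordAt, List.ofFn_inj]
  constructor
  · intro h k hk; exact congrFun h ⟨k, hk⟩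
  · intro h; funext t; exact h t.1 t.2

lemma xcongr (x : ℤ → A) {a b : ℤ} (h : a = b) : x a = x b := congrArg x h

theorem stmt8 [Fintype A] [TopologicalSpace A] [DiscreteTopology A]
    (x : ℤ → A) (X : Set (ℤ → A)) (hX : X = orbitClosure x)
    (hnp : ¬ EventuallyPeriodicRight x) (n : ℕ)
    (i : ℤ) (m : ℕ) (hm : complexity X n + n ≤ m) :
    ∃ j : ℕ, j + n ≤ m ∧ wordAt x (i + j) n ∈ RS X n := by
  by_contra hcon
  push_neg at hcon
  have hx : x ∈ X := hX ▸ mem_orbitClosure_self x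
  have hlang : ∀ j : ℤ, wordAt x j n ∈ langOf X n :=
    fun j => ⟨wordAt_length x j n, wordIn_wordAt hx j n⟩
  have hns : ∀ j : ℕ, j + n ≤ m → ∀ a b : A,
      WordIn X (wordAt x (i + j) n ++ [a]) → WordIn X (wordAt x (i + j) n ++ [b]) → a = b := by
    intro j hj a b ha hb
    by_contra hab
    exact hcon j hj ⟨wordAt_length _ _ _, a, b, hab, ha, hb⟩
  have hfin : (langOf X n).Finite :=
    (List.finite_length_eq A n).subset (fun w hw => hw.1)
  obtain ⟨j1, j2, h12, hj2le, heq⟩ :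
      ∃ j1 j2 : ℕ, j1 < j2 ∧ j2 + n ≤ m ∧ wordAt x (i + j1) n = wordAt x (i + j2) n := by
    have hcard : hfin.toFinset.card < (Finset.range (m - n + 1)).card := by
      rw [Finset.card_range]
      have : hfin.toFinset.card = complexity X n :=
        (Set.ncard_eq_toFinset_card _ hfin).symm
      omega
    obtain ⟨a, ha, b, hb, hab, hfab⟩ :=
      Finset.exists_ne_map_eq_of_card_lt_of_maps_to hcard
        (f := fun j => wordAt x (i + j) n)
        (fun j _ => hfin.mem_toFinset.mpr (hlang _))
    simp only [Finset.mem_range] at ha hb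
    rcases Nat.lt_or_ge a b with h | h
    · exact ⟨a, b, h, by omega, hfab⟩
    · exact ⟨b, a, lt_of_le_of_ne h (Ne.symm hab), by omega, hfab.symm⟩
  set p := j2 - j1 with hpdef
  have hp0 : 0 < p := by omega
  have base : ∀ k : ℕ, k < n → x (i + j1 + k + p) = x (i + j1 + k) := by
    intro k hk
    have h := (wordAt_eq_iff x (i + j1) (i + j2) n).mp heq k hk
    calc x (i + j1 + k + p) = x (i + j2 + k) := xcongr x (by omega)
      _ = x (i + j1 + k) := h.symm
  have per : ∀ s : ℕ, x (i + j1 + s + p) = x (i + j1 + s) := by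
    intro s
    induction s using Nat.strong_induction_on with
    | _ s IH =>
      rcases Nat.lt_or_ge s n with hs | hs
      · exact base s hs
      · obtain ⟨t, ht⟩ : ∃ t, t + n = s := ⟨s - n, by omega⟩
        obtain ⟨r, d, hr, hrd⟩ : ∃ r d, r < p ∧ d * p + r = t :=
          ⟨t % p, t / p, Nat.mod_lt _ hp0, by
            have h1 := Nat.div_add_mod t p
            have h2 : t / p * p = p * (t / p) := Nat.mul_comm _ _
            omega⟩
        have A : ∀ c : ℕ, c * p + r + n ≤ s → ∀ k : ℕ, k < n →
            x (i + j1 + ((c * p + r + k : ℕ) : ℤ)) = x (i + j1 + ((r + k : ℕ) : ℤ)) := by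
          intro c
          induction c with
          | zero => intro _ k hk; exact xcongr x (by push_cast; ring)
          | succ c ih =>
            intro hc k hk
            have hcp : (c + 1) * p = c * p + p := by ring
            calc x (i + j1 + (((c + 1) * p + r + k : ℕ) : ℤ))
                = x (i + j1 + ((c * p + r + k : ℕ) : ℤ) + p) := xcongr x (by push_cast; ring)
              _ = x (i + j1 + ((c * p + r + k : ℕ) : ℤ)) := IH _ (by omega)
              _ = x (i + j1 + ((r + k : ℕ) : ℤ)) := ih (by omega) k hk
        have hA : ∀ k : ℕ, k < n →
            x (i + j1 + ((t + k : ℕ) : ℤ)) = x (i + j1 + ((r + k : ℕ) : ℤ)) := by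
          intro k hk
          calc x (i + j1 + ((t + k : ℕ) : ℤ))
              = x (i + j1 + ((d * p + r + k : ℕ) : ℤ)) := xcongr x (by rw [hrd])
            _ = x (i + j1 + ((r + k : ℕ) : ℤ)) := A d (by omega) k hk
        have hB : ∀ k : ℕ, k < n →
            x (i + j1 + ((t + k : ℕ) : ℤ) + p) = x (i + j1 + ((r + k : ℕ) : ℤ)) :=
          fun k hk => (IH (t + k) (by omega)).trans (hA k hk)
        have hu1 : wordAt x (i + j1 + t) n = wordAt x (i + ((j1 + r : ℕ) : ℤ)) n := by
          rw [wordAt_eq_iff]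
          intro k hk
          calc x (i + j1 + t + k) = x (i + j1 + ((t + k : ℕ) : ℤ)) := xcongr x (by push_cast; ring)
            _ = x (i + j1 + ((r + k : ℕ) : ℤ)) := hA k hk
            _ = x (i + ((j1 + r : ℕ) : ℤ) + k) := xcongr x (by push_cast; ring)
        have hu2 : wordAt x (i + j1 + t + p) n = wordAt x (i + ((j1 + r : ℕ) : ℤ)) n := by
          rw [wordAt_eq_iff]
          intro k hk
          calc x (i + j1 + t + p + k)
              = x (i + j1 + ((t + k : ℕ) : ℤ) + p) := xcongr x (by push_cast; ring)
            _ = x (i + j1 + ((r + k : ℕ) : ℤ)) := hB k hk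
            _ = x (i + ((j1 + r : ℕ) : ℤ) + k) := xcongr x (by push_cast; ring)
        have ha : WordIn X (wordAt x (i + ((j1 + r : ℕ) : ℤ)) n ++ [x (i + j1 + t + n)]) := by
          rw [← hu1, ← wordAt_succ]
          exact wordIn_wordAt hx _ _
        have hb : WordIn X (wordAt x (i + ((j1 + r : ℕ) : ℤ)) n ++ [x (i + j1 + t + p + n)]) := by
          rw [← hu2, ← wordAt_succ]
          exact wordIn_wordAt hx _ _
        have hkey := hns (j1 + r) (by omega) _ _ ha hb
        calc x (i + j1 + s + p) = x (i + j1 + t + p + n) := xcongr x (by omega)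
          _ = x (i + j1 + t + n) := hkey.symm
          _ = x (i + j1 + s) := xcongr x (by omega)
  refine hnp ⟨p, by exact_mod_cast hp0, i + j1, fun i' hi' => ?_⟩
  set s := (i' - (i + j1)).toNat with hsdef
  have hsz : (s : ℤ) = i' - (i + j1) := Int.toNat_of_nonneg (by omega)
  calc x (i' + p) = x (i + j1 + s + p) := xcongr x (by omega)
    _ = x (i + j1 + s) := per s
    _ = x i' := xcongr x (by omega)
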